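/- arXiv:math/9912148 — 5 statements merged into one kernel-verified Lean document; each statement's English description precedes it below -/
import Mathlib

section
/- Let γ: ∅ = γ(0) ⊂ γ(1) ⊂ ... ⊂ γ(n) = Λ be any saturated chain of partitions. For each step define κ(γ(j−1), γ(j)) = t^{−(γ(j)'_{i_j} − 1)} ∏_{s∈R_j} (1 − q^{a_{γ(j)}(s)+1} t^{l_{γ(j)}(s)})/(1 − q^{a_{γ(j-1)}(s)+1} t^{l_{γ(j-1)}(s)}) ∏_{s∈C_j} (1 − q^{a_{γ(j)}(s)} t^{l_{γ(j)}(s)+1})/(1 − q^{a_{γ(j-1)}(s)} t^{l_{γ(j-1)}(s)+1}) and ψ'_j = ∏_{s∈C_j} (1 − q^{a_{γ(j)}(s)} t^{l_{γ(j)}(s)+1})(1 − q^{a_{γ(j-1)}(s)+1} t^{l_{γ(j-1)}(s)}) / [(1 − q^{a_{γ(j)}(s)+1} t^{l_{γ(j)}(s)})(1 − q^{a_{γ(j-1)}(s)} t^{l_{γ(j-1)}(s)+1})]. Then ∏_{j=1}^{n} ψ'_j / κ(γ(j−1), γ(j)) = (1−q)^n t^{n(Λ)} / ∏_{s∈Λ}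 (1 − q^{a_Λ(s)+1} t^{l_Λ(s)}), an identity in ℚ(q,t) depending only on the endpoint Λ and not on the chain. -/
/-- The field ℚ(q,t) of rational functions in two variables. -/
abbrev QQt : Type := FractionRing (MvPolynomial (Fin 2) ℚ)

noncomputable def qv : QQt := algebraMap (MvPolynomial (Fin 2) ℚ) QQt (MvPolynomial.X 0)
noncomputable def tv : QQt := algebraMap (MvPolynomial (Fin 2) ℚ) QQt (MvPolynomial.X 1)

/-- Arm length: the number of cells of `μ` strictly east of the cell `s`. -/
def arm (μ : YoungDiagram) (s : ℕ × ℕ) : ℕ := μ.rowLen s.1 - (s.2 + 1)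

/-- Leg length: the number of cells of `μ` strictly south of the cell `s`. -/
def leg (μ : YoungDiagram) (s : ℕ × ℕ) : ℕ := μ.colLen s.2 - (s.1 + 1)

/-- The Macdonald Pieri coefficient `ψ'_{Λ/λ}(q,t)`, a product over the cells
of `λ` in the column `c` of the added cell. -/
noncomputable def psi' (μ Λ : YoungDiagram) (c : ℕ) : QQt :=
  ∏ s ∈ μ.cells.filter (fun s => s.2 = c),
    ((1 - qv ^ arm Λ s * tv ^ (leg Λ s + 1)) * (1 - qv ^ (arm μ s + 1) * tv ^ leg μ s)) /
      ((1 - qv ^ (arm Λ s + 1) * tv ^ leg Λ s) * (1 - qv ^ arm μ s * tv ^ (leg μ s + 1)))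

/-- The multiplicity `κ(λ,Λ)` of the Macdonald Bratteli diagram, where the cell
added to `λ` to obtain `Λ` is `(r, c)`. -/
noncomputable def kappa (μ Λ : YoungDiagram) (r c : ℕ) : QQt :=
  tv ^ (-((Λ.colLen c : ℤ) - 1)) *
    (∏ s ∈ μ.cells.filter (fun s => s.1 = r),
      (1 - qv ^ (arm Λ s + 1) * tv ^ leg Λ s) / (1 - qv ^ (arm μ s + 1) * tv ^ leg μ s)) *
    (∏ s ∈ μ.cells.filter (fun s => s.2 = c),
      (1 - qv ^ arm Λ s * tv ^ (leg Λ s + 1)) / (1 - qv ^ arm μ s * tv ^ (leg μ s + 1)))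

open YoungDiagram Finset

set_option linter.unusedSectionVars false
set_option maxHeartbeats 1000000

lemma one_sub_ne (i j : ℕ) (h : 0 < i + j) : (1 : QQt) - qv ^ i * tv ^ j ≠ 0 := by
  intro hz
  have h1 : qv ^ i * tv ^ j = 1 := by linear_combination -hz
  have h2 : (algebraMap (MvPolynomial (Fin 2) ℚ) QQt) ((MvPolynomial.X 0) ^ i * (MvPolynomial.X 1) ^ j) = (algebraMap (MvPolynomial (Fin 2) ℚ) QQt) 1 := by
    simpa [qv, tv, map_mul, map_pow] using h1
  have h3 : (MvPolynomial.X (0 : Fin 2) : MvPolynomial (Fin 2) ℚ) ^ i * (MvPolynomial.X 1) ^ j = 1 :=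
    IsFractionRing.injective (MvPolynomial (Fin 2) ℚ) QQt h2
  have h4 := congrArg (MvPolynomial.eval (fun _ => (2 : ℚ))) h3
  simp [MvPolynomial.eval_pow] at h4
  have he : (2:ℚ) ^ i * 2 ^ j = 2 ^ (i+j) := by ring
  rw [he] at h4
  have : (2:ℚ)^(i+j) > 1 := one_lt_pow₀ (by norm_num) (by omega)
  linarith

lemma tv_ne : (tv : QQt) ≠ 0 := by
  intro h
  have h2 : (algebraMap (MvPolynomial (Fin 2) ℚ) QQt) (MvPolynomial.X 1) = (algebraMap (MvPolynomial (Fin 2) ℚ) QQt) 0 := by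
    rw [map_zero]; exact h
  exact MvPolynomial.X_ne_zero 1 (IsFractionRing.injective (MvPolynomial (Fin 2) ℚ) QQt h2)

/-- `F μ s = 1 - q^{a(s)+1} t^{l(s)}`. -/
noncomputable def Fq (μ : YoungDiagram) (s : ℕ × ℕ) : QQt := 1 - qv ^ (arm μ s + 1) * tv ^ leg μ s
/-- `G μ s = 1 - q^{a(s)} t^{l(s)+1}`. -/
noncomputable def Gq (μ : YoungDiagram) (s : ℕ × ℕ) : QQt := 1 - qv ^ arm μ s * tv ^ (leg μ s + 1)

lemma Fq_ne (μ : YoungDiagram) (s : ℕ × ℕ) : Fq μ s ≠ 0 := one_sub_ne _ _ (by omega)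
lemma Gq_ne (μ : YoungDiagram) (s : ℕ × ℕ) : Gq μ s ≠ 0 := one_sub_ne _ _ (by omega)

section
variable {μ Λ : YoungDiagram} {r c : ℕ}

lemma rowLen_le_iff {μ : YoungDiagram} {i k : ℕ} : μ.rowLen i ≤ k ↔ (i, k) ∉ μ := by
  rw [mem_iff_lt_rowLen]; omega

lemma colLen_le_iff {μ : YoungDiagram} {j k : ℕ} : μ.colLen j ≤ k ↔ (k, j) ∉ μ := by
  rw [mem_iff_lt_colLen]; omega

variable (hnot : (r, c) ∉ μ.cells) (hins : Λ.cells = insert (r, c) μ.cells)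
include hnot hins

lemma mem_L (x y : ℕ) : (x, y) ∈ Λ ↔ (x, y) = (r, c) ∨ (x, y) ∈ μ := by
  rw [← YoungDiagram.mem_cells, hins]; simp

lemma c_eq : c = μ.rowLen r := by
  have h1 : μ.rowLen r ≤ c := rowLen_le_iff.mpr hnot
  have h2 : (r, c) ∈ Λ := by rw [mem_L hnot hins]; left; rfl
  rcases Nat.eq_or_lt_of_le h1 with h' | h'
  · omega
  · exfalso
    have : (r, μ.rowLen r) ∈ Λ := Λ.up_left_mem le_rfl (Nat.le_of_lt h') h2
    rw [mem_L hnot hins] at this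
    rcases this with h'' | h''
    · simp at h''; omega
    · rw [mem_iff_lt_rowLen] at h''; omega

lemma r_eq : r = μ.colLen c := by
  have h1 : μ.colLen c ≤ r := colLen_le_iff.mpr hnot
  have h2 : (r, c) ∈ Λ := by rw [mem_L hnot hins]; left; rfl
  rcases Nat.eq_or_lt_of_le h1 with h' | h'
  · omega
  · exfalso
    have : (μ.colLen c, c) ∈ Λ := Λ.up_left_mem (Nat.le_of_lt h') le_rfl h2
    rw [mem_L hnot hins] at this
    rcases this with h'' | h''
    · simp at h''; omega
    · rw [mem_iff_lt_colLen] at h''; omega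

lemma rowLen_mono (i : ℕ) : μ.rowLen i ≤ Λ.rowLen i := by
  by_contra h
  push_neg at h
  have h1 : (i, Λ.rowLen i) ∈ μ := mem_iff_lt_rowLen.mpr h
  have h2 : (i, Λ.rowLen i) ∈ Λ := by rw [mem_L hnot hins]; right; exact h1
  rw [mem_iff_lt_rowLen] at h2; omega

lemma rowLen_L_r : Λ.rowLen r = μ.rowLen r + 1 := by
  have hc := c_eq hnot hins
  apply le_antisymm
  · rw [rowLen_le_iff, mem_L hnot hins]
    push_neg
    exact ⟨by simp; omega, by rw [mem_iff_lt_rowLen]; omega⟩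
  · have : (r, c) ∈ Λ := by rw [mem_L hnot hins]; left; rfl
    rw [mem_iff_lt_rowLen] at this; omega

lemma rowLen_L_ne {i : ℕ} (hi : i ≠ r) : Λ.rowLen i = μ.rowLen i := by
  apply le_antisymm
  · rw [rowLen_le_iff, mem_L hnot hins]
    push_neg
    exact ⟨by simp [hi], by rw [mem_iff_lt_rowLen]; omega⟩
  · exact rowLen_mono hnot hins i

lemma colLen_mono (j : ℕ) : μ.colLen j ≤ Λ.colLen j := by
  by_contra h
  push_neg at h
  have h1 : (Λ.colLen j, j) ∈ μ := mem_iff_lt_colLen.mpr h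
  have h2 : (Λ.colLen j, j) ∈ Λ := by rw [mem_L hnot hins]; right; exact h1
  rw [mem_iff_lt_colLen] at h2; omega

lemma colLen_L_c : Λ.colLen c = μ.colLen c + 1 := by
  have hr := r_eq hnot hins
  apply le_antisymm
  · rw [colLen_le_iff, mem_L hnot hins]
    push_neg
    exact ⟨by simp; omega, by rw [mem_iff_lt_colLen]; omega⟩
  · have : (r, c) ∈ Λ := by rw [mem_L hnot hins]; left; rfl
    rw [mem_iff_lt_colLen] at this; omega

lemma colLen_L_ne {j : ℕ} (hj : j ≠ c) : Λ.colLen j = μ.colLen j := by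
  apply le_antisymm
  · rw [colLen_le_iff, mem_L hnot hins]
    push_neg
    exact ⟨by simp [hj], by rw [mem_iff_lt_colLen]; omega⟩
  · exact colLen_mono hnot hins j

lemma col_lt_of_row (s : ℕ × ℕ) (hs : s ∈ μ.cells) (h : s.1 = r) : s.2 < c := by
  have hmem : s ∈ μ := hs
  rw [show s = (s.1, s.2) from rfl, mem_iff_lt_rowLen] at hmem
  rw [c_eq hnot hins]; rw [h] at hmem; omega

lemma row_lt_of_col (s : ℕ × ℕ) (hs : s ∈ μ.cells) (h : s.2 = c) : s.1 < r := by
  have hmem : s ∈ μ := hs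
  rw [show s = (s.1, s.2) from rfl, mem_iff_lt_colLen] at hmem
  rw [r_eq hnot hins]; rw [h] at hmem; omega

lemma arm_row (s : ℕ × ℕ) (hs : s ∈ μ.cells) (h : s.1 = r) : arm Λ s = arm μ s + 1 := by
  have hmem : s ∈ μ := hs
  rw [show s = (s.1, s.2) from rfl, mem_iff_lt_rowLen] at hmem
  simp only [arm, h, rowLen_L_r hnot hins]
  rw [← h]; omega

lemma leg_row (s : ℕ × ℕ) (hs : s ∈ μ.cells) (h : s.1 = r) : leg Λ s = leg μ s := by
  have h2 : s.2 ≠ c := Nat.ne_of_lt (col_lt_of_row hnot hins s hs h)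
  simp only [leg, colLen_L_ne hnot hins h2]

lemma leg_col (s : ℕ × ℕ) (hs : s ∈ μ.cells) (h : s.2 = c) : leg Λ s = leg μ s + 1 := by
  have hmem : s ∈ μ := hs
  rw [show s = (s.1, s.2) from rfl, mem_iff_lt_colLen] at hmem
  simp only [leg, h, colLen_L_c hnot hins]
  rw [← h]; omega

lemma arm_col (s : ℕ × ℕ) (hs : s ∈ μ.cells) (h : s.2 = c) : arm Λ s = arm μ s := by
  have h2 : s.1 ≠ r := Nat.ne_of_lt (row_lt_of_col hnot hins s hs h)
  simp only [arm, rowLen_L_ne hnot hins h2]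

lemma arm_other (s : ℕ × ℕ) (h : s.1 ≠ r) : arm Λ s = arm μ s := by
  simp only [arm, rowLen_L_ne hnot hins h]

lemma leg_other (s : ℕ × ℕ) (h : s.2 ≠ c) : leg Λ s = leg μ s := by
  simp only [leg, colLen_L_ne hnot hins h]

lemma Fq_eq_other (s : ℕ × ℕ) (h1 : s.1 ≠ r) (h2 : s.2 ≠ c) : Fq Λ s = Fq μ s := by
  simp only [Fq, arm_other hnot hins s h1, leg_other hnot hins s h2]

lemma arm_new : arm Λ (r, c) = 0 := by
  simp only [arm, rowLen_L_r hnot hins, ← c_eq hnot hins]; omega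

lemma leg_new : leg Λ (r, c) = 0 := by
  simp only [leg, colLen_L_c hnot hins, ← r_eq hnot hins]; omega

lemma Fq_new : Fq Λ (r, c) = 1 - qv := by
  simp [Fq, arm_new hnot hins, leg_new hnot hins]

lemma step :
    psi' μ Λ c / kappa μ Λ r c
      = (1 - qv) * tv ^ r * (∏ s ∈ μ.cells, Fq μ s) / (∏ s ∈ Λ.cells, Fq Λ s) := by
  classical
  set μR := μ.cells.filter (fun s => s.1 = r) with hμR
  set μC := μ.cells.filter (fun s => s.2 = c) with hμC
  have hpsi : psi' μ Λ c = ∏ s ∈ μC, (Gq Λ s * Fq μ s) / (Fq Λ s * Gq μ s) := rfl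
  have htvp : tv ^ (-((Λ.colLen c : ℤ) - 1)) = (tv ^ r)⁻¹ := by
    have h1 : Λ.colLen c = r + 1 := by
      rw [colLen_L_c hnot hins, ← r_eq hnot hins]
    rw [h1]
    push_cast
    rw [show -((r : ℤ) + 1 - 1) = -(r : ℤ) by ring, zpow_neg, zpow_natCast]
  have hk : kappa μ Λ r c
      = (tv ^ r)⁻¹ * (∏ s ∈ μR, Fq Λ s / Fq μ s) * (∏ s ∈ μC, Gq Λ s / Gq μ s) := by
    rw [kappa, htvp]; rfl
  set A := ∏ s ∈ μR, Fq μ s with hA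
  set A' := ∏ s ∈ μR, Fq Λ s with hA'
  set B := ∏ s ∈ μC, Fq μ s with hB
  set B' := ∏ s ∈ μC, Fq Λ s with hB'
  set D := ∏ s ∈ μC, Gq μ s with hD
  set D' := ∏ s ∈ μC, Gq Λ s with hD'
  set P := ∏ s ∈ μ.cells, Fq μ s with hP
  set P' := ∏ s ∈ μ.cells, Fq Λ s with hP'
  have hAne : A ≠ 0 := prod_ne_zero_iff.mpr fun s _ => Fq_ne μ s
  have hA'ne : A' ≠ 0 := prod_ne_zero_iff.mpr fun s _ => Fq_ne Λ s
  have hBne : B ≠ 0 := prod_ne_zero_iff.mpr fun s _ => Fq_ne μ s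
  have hB'ne : B' ≠ 0 := prod_ne_zero_iff.mpr fun s _ => Fq_ne Λ s
  have hDne : D ≠ 0 := prod_ne_zero_iff.mpr fun s _ => Gq_ne μ s
  have hD'ne : D' ≠ 0 := prod_ne_zero_iff.mpr fun s _ => Gq_ne Λ s
  have hPne : P ≠ 0 := prod_ne_zero_iff.mpr fun s _ => Fq_ne μ s
  have hP'ne : P' ≠ 0 := prod_ne_zero_iff.mpr fun s _ => Fq_ne Λ s
  have htne : (tv : QQt) ^ r ≠ 0 := pow_ne_zero _ tv_ne
  have hpsi2 : psi' μ Λ c = (D' * B) / (B' * D) := by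
    rw [hpsi, prod_div_distrib, prod_mul_distrib, prod_mul_distrib]
  have hk2 : kappa μ Λ r c = (tv ^ r)⁻¹ * (A' / A) * (D' / D) := by
    rw [hk, prod_div_distrib, prod_div_distrib]
  have hdisj : Disjoint μR μC := by
    rw [Finset.disjoint_left]
    intro s h1 h2
    rw [hμR, mem_filter] at h1
    rw [hμC, mem_filter] at h2
    apply hnot
    have : s = (r, c) := Prod.ext h1.2 h2.2
    rw [← this]; exact h1.1
  have hsub : μR ∪ μC ⊆ μ.cells := union_subset (filter_subset _ _) (filter_subset _ _)
  have key : P / P' = (A / A') * (B / B') := by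
    have h1 : ∏ s ∈ μ.cells, (Fq μ s / Fq Λ s) = ∏ s ∈ μR ∪ μC, (Fq μ s / Fq Λ s) := by
      refine (prod_subset hsub ?_).symm
      intro s hs hs2
      rw [mem_union, hμR, hμC, mem_filter, mem_filter] at hs2
      push_neg at hs2
      have h1 : s.1 ≠ r := (hs2.1 hs)
      have h2 : s.2 ≠ c := (hs2.2 hs)
      rw [Fq_eq_other hnot hins s h1 h2, div_self (Fq_ne μ s)]
    rw [prod_div_distrib] at h1
    rw [← hP, ← hP'] at h1
    rw [h1, prod_union hdisj, prod_div_distrib, prod_div_distrib]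
  have hPL : (∏ s ∈ Λ.cells, Fq Λ s) = (1 - qv) * P' := by
    rw [hins, prod_insert hnot, Fq_new hnot hins]
  have hqne : (1 : QQt) - qv ≠ 0 := by
    have := one_sub_ne 1 0 (by omega)
    simpa using this
  rw [hpsi2, hk2, hPL]
  have key2 : P * (A' * B') = P' * (A * B) := by
    field_simp at key
    linear_combination key
  field_simp
  linear_combination (-1 : QQt) * key2

lemma nstat_step :
    ∑ i ∈ Finset.range (Λ.colLen 0), i * Λ.rowLen i
      = r + ∑ i ∈ Finset.range (μ.colLen 0), i * μ.rowLen i := by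
  classical
  have hrow : ∀ i, Λ.rowLen i = μ.rowLen i + (if i = r then 1 else 0) := by
    intro i
    rcases eq_or_ne i r with rfl | hi
    · simp [rowLen_L_r hnot hins]
    · simp [rowLen_L_ne hnot hins hi, hi]
  have hle : μ.colLen 0 ≤ Λ.colLen 0 := colLen_mono hnot hins 0
  have hrm : (r, c) ∈ Λ := by rw [mem_L hnot hins]; left; rfl
  have hr0 : r < Λ.colLen 0 := by
    have : (r, 0) ∈ Λ := Λ.up_left_mem le_rfl (Nat.zero_le _) hrm
    rwa [mem_iff_lt_colLen] at this
  have h1 : ∑ i ∈ Finset.range (Λ.colLen 0), i * Λ.rowLen i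
      = (∑ i ∈ Finset.range (Λ.colLen 0), i * μ.rowLen i)
        + ∑ i ∈ Finset.range (Λ.colLen 0), (if i = r then i else 0) := by
    rw [← Finset.sum_add_distrib]
    apply Finset.sum_congr rfl
    intro i _
    rw [hrow i]
    rcases eq_or_ne i r with rfl | hi
    · simp [Nat.mul_add]
    · simp [hi]
  have h2 : ∑ i ∈ Finset.range (Λ.colLen 0), (if i = r then i else 0) = r := by
    rw [Finset.sum_ite_eq' (Finset.range (Λ.colLen 0)) r (fun i => i)]
    simp [Finset.mem_range, hr0]
  have h3 : ∑ i ∈ Finset.range (Λ.colLen 0), i * μ.rowLen i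
      = ∑ i ∈ Finset.range (μ.colLen 0), i * μ.rowLen i := by
    refine (Finset.sum_subset ?_ ?_).symm
    · intro i hi
      rw [Finset.mem_range] at hi ⊢
      omega
    · intro i _ hi2
      rw [Finset.mem_range] at hi2
      push_neg at hi2
      have : μ.rowLen i = 0 := by
        rw [← Nat.le_zero, rowLen_le_iff]
        rw [mem_iff_lt_colLen]
        omega
      simp [this]
  omega

end

lemma colLen_bot (j : ℕ) : (⊥ : YoungDiagram).colLen j = 0 := by
  rw [← Nat.le_zero, colLen_le_iff]
  simp

/-- Combinatorial exchangeability (Lemma 1 of the paper).  For any saturated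
chain `∅ = γ(0) ⊂ γ(1) ⊂ ⋯ ⊂ γ(n) = Λ` of Young diagrams, where at step `j`
the cell `(r j, c j)` is added, the product
`∏_{j=1}^{n} ψ'_{γ(j)/γ(j-1)} / κ(γ(j-1), γ(j))` equals
`(1−q)^n t^{n(Λ)} / ∏_{s∈Λ} (1 − q^{a_Λ(s)+1} t^{l_Λ(s)})`, an identity in
`ℚ(q,t)` depending only on the endpoint `Λ` and not on the chain.  Here
`n(Λ) = Σ_i (i−1)Λ_i` is written 0-based as `Σ i · rowLen i`. -/
theorem psi_over_kappa_path_independent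
    (n : ℕ) (γ : ℕ → YoungDiagram) (r c : ℕ → ℕ)
    (h0 : γ 0 = ⊥)
    (hstep : ∀ j < n, (r j, c j) ∉ (γ j).cells ∧
      (γ (j + 1)).cells = insert (r j, c j) (γ j).cells) :
    ∏ j ∈ Finset.range n, psi' (γ j) (γ (j + 1)) (c j) / kappa (γ j) (γ (j + 1)) (r j) (c j)
      = (1 - qv) ^ n * tv ^ (∑ i ∈ Finset.range ((γ n).colLen 0), i * (γ n).rowLen i) /
          ∏ s ∈ (γ n).cells, (1 - qv ^ (arm (γ n) s + 1) * tv ^ leg (γ n) s) := by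
  induction n with
  | zero =>
    simp [h0, colLen_bot]
  | succ n ih =>
    have ih' := ih (fun j hj => hstep j (Nat.lt_succ_of_lt hj))
    obtain ⟨hnot, hins⟩ := hstep n (Nat.lt_succ_self n)
    rw [Finset.prod_range_succ, ih', step hnot hins]
    have hF : ∀ (ν : YoungDiagram),
        (∏ s ∈ ν.cells, (1 - qv ^ (arm ν s + 1) * tv ^ leg ν s)) = ∏ s ∈ ν.cells, Fq ν s :=
      fun ν => rfl
    rw [hF, hF, nstat_step hnot hins]
    have hPne : (∏ s ∈ (γ n).cells, Fq (γ n) s) ≠ 0 :=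
      Finset.prod_ne_zero_iff.mpr fun s _ => Fq_ne (γ n) s
    have hP'ne : (∏ s ∈ (γ (n+1)).cells, Fq (γ (n+1)) s) ≠ 0 :=
      Finset.prod_ne_zero_iff.mpr fun s _ => Fq_ne (γ (n+1)) s
    rw [pow_add, pow_succ]
    field_simp
    ring
end

section
/- Specialize q = 0 and replace t by 1/q where q is now a prime power (or any real > 1). Let λ ⊂ Λ with the new cell added in column i. Then the multiplicity κ(λ,Λ) = (1/t^{Λ'_i − 1}) ∏_{s∈R} (1 − q^{a_Λ+1}t^{l_Λ})/(1 − q^{a_λ+1}t^{l_λ}) ∏_{s∈C} (1 − q^{a_Λ}t^{l_Λ+1})/(1 − q^{a_λ}t^{l_λ+1}) evaluated at these parameters equals q^{λ'_{i+1}} + q^{λ'_{i+1}+1} + ... + q^{λ'_i}; in particular κ(λ,Λ) is a positive integer when q is a positive integer. -/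
lemma prod_div_telescope' (H : ℕ → ℝ) (n : ℕ) (hH : ∀ i ≤ n, H i ≠ 0) :
    ∏ i ∈ Finset.range n, H i / H (i + 1) = H 0 / H n := by
  induction n with
  | zero => simp [div_self (hH 0 le_rfl)]
  | succ n ih =>
    rw [Finset.prod_range_succ, ih (fun i hi => hH i (hi.trans (Nat.le_succ n)))]
    rw [div_mul_div_comm, mul_comm (H n) (H (n+1)), mul_div_mul_right _ _ (hH n (Nat.le_succ n))]

/-- Hall–Littlewood specialization: set the Macdonald parameter `q = 0` and
`t = 1/Q` where `Q > 1` (e.g. the size of a finite field).  Let `λ ⊂ Λ` be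
partitions with the new cell added at `(r, c)` (so 1-based column `i = c + 1`,
`λ'_i = colLen c`, `λ'_{i+1} = colLen (c+1)`).  Then the multiplicity
`κ(λ,Λ) = (1/t^{Λ'_i − 1}) ∏_{s∈R} (1−q^{a_Λ+1}t^{l_Λ})/(1−q^{a_λ+1}t^{l_λ})
 ∏_{s∈C} (1−q^{a_Λ}t^{l_Λ+1})/(1−q^{a_λ}t^{l_λ+1})` evaluated at these
parameters (with the convention `0^0 = 1`) equals
`Q^{λ'_{i+1}} + Q^{λ'_{i+1}+1} + ⋯ + Q^{λ'_i}`; in particular it is a positive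
integer when `Q` is a positive integer. -/
theorem hall_littlewood_multiplicity
    (Q : ℝ) (hQ : 1 < Q) (μ Λ : YoungDiagram) (r c : ℕ)
    (hnot : (r, c) ∉ μ.cells)
    (hins : Λ.cells = insert (r, c) μ.cells) :
    (1 / (1 / Q) ^ (Λ.colLen c - 1)) *
      (∏ s ∈ μ.cells.filter (fun s => s.1 = r),
        (1 - (0 : ℝ) ^ (arm Λ s + 1) * (1 / Q) ^ leg Λ s) /
          (1 - (0 : ℝ) ^ (arm μ s + 1) * (1 / Q) ^ leg μ s)) *
      (∏ s ∈ μ.cells.filter (fun s => s.2 = c),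
        (1 - (0 : ℝ) ^ arm Λ s * (1 / Q) ^ (leg Λ s + 1)) /
          (1 - (0 : ℝ) ^ arm μ s * (1 / Q) ^ (leg μ s + 1)))
    = ∑ k ∈ Finset.Icc (μ.colLen (c + 1)) (μ.colLen c), Q ^ k ∧
    ∀ m : ℕ, 0 < m → 0 < ∑ k ∈ Finset.Icc (μ.colLen (c + 1)) (μ.colLen c), m ^ k := by
  have hQ0 : (0:ℝ) < Q := lt_trans one_pos hQ
  have hQne : Q ≠ 0 := ne_of_gt hQ0
  set b := μ.colLen (c + 1) with hbdef
  set t : ℝ := 1 / Q with ht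
  have ht0 : 0 < t := by positivity
  have ht1 : t < 1 := by rw [ht, div_lt_one hQ0]; exact hQ
  -- membership in Λ
  have hmemΛ : ∀ p : ℕ × ℕ, p ∈ Λ ↔ p = (r, c) ∨ p ∈ μ := by
    intro p
    have h : (p ∈ Λ.cells) ↔ (p = (r, c) ∨ p ∈ μ.cells) := by
      rw [hins]; exact Finset.mem_insert
    exact h
  have hrcΛ : (r, c) ∈ Λ := (hmemΛ _).mpr (Or.inl rfl)
  have hnotμ : (r, c) ∉ μ := hnot
  -- colLen of μ at c is r
  have hcol : μ.colLen c = r := by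
    apply Nat.le_antisymm
    · by_contra h
      exact hnotμ (YoungDiagram.mem_iff_lt_colLen.mpr (Nat.lt_of_not_le h))
    · by_contra h
      have hlt : μ.colLen c < r := Nat.lt_of_not_le h
      have hmem : (μ.colLen c, c) ∈ Λ := Λ.up_left_mem (le_of_lt hlt) le_rfl hrcΛ
      rcases (hmemΛ _).mp hmem with heq | hmem'
      · exact absurd (congrArg Prod.fst heq) (ne_of_lt hlt)
      · exact absurd (YoungDiagram.mem_iff_lt_colLen.mp hmem') (lt_irrefl _)
  have hb : b ≤ r := hcol ▸ μ.colLen_anti c (c + 1) (Nat.le_succ c)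
  -- colLen of Λ at c is r + 1
  have hcolΛ : Λ.colLen c = r + 1 := by
    apply Nat.le_antisymm
    · by_contra h
      have : (r + 1, c) ∈ Λ := YoungDiagram.mem_iff_lt_colLen.mpr (Nat.lt_of_not_le h)
      rcases (hmemΛ _).mp this with heq | hmem'
      · exact absurd (congrArg Prod.fst heq) (Nat.succ_ne_self r)
      · have := YoungDiagram.mem_iff_lt_colLen.mp hmem'
        omega
    · exact Nat.succ_le_of_lt (YoungDiagram.mem_iff_lt_colLen.mp hrcΛ)
  -- rowLen of Λ equals rowLen of μ off row r
  have hrowΛ : ∀ i, i ≠ r → Λ.rowLen i = μ.rowLen i := by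
    intro i hi
    apply Nat.le_antisymm
    · by_contra h
      have : (i, μ.rowLen i) ∈ Λ := YoungDiagram.mem_iff_lt_rowLen.mpr (Nat.lt_of_not_le h)
      rcases (hmemΛ _).mp this with heq | hmem'
      · exact hi (congrArg Prod.fst heq)
      · exact absurd (YoungDiagram.mem_iff_lt_rowLen.mp hmem') (lt_irrefl _)
    · by_contra h
      have hmem : (i, Λ.rowLen i) ∈ μ := YoungDiagram.mem_iff_lt_rowLen.mpr (Nat.lt_of_not_le h)
      have : (i, Λ.rowLen i) ∈ Λ := (hmemΛ _).mpr (Or.inr hmem)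
      exact absurd (YoungDiagram.mem_iff_lt_rowLen.mp this) (lt_irrefl _)
  -- first product is 1
  have hP1 : (∏ s ∈ μ.cells.filter (fun s => s.1 = r),
        (1 - (0 : ℝ) ^ (arm Λ s + 1) * t ^ leg Λ s) /
          (1 - (0 : ℝ) ^ (arm μ s + 1) * t ^ leg μ s)) = 1 := by
    apply Finset.prod_eq_one
    intro s _
    rw [zero_pow (Nat.succ_ne_zero _), zero_pow (Nat.succ_ne_zero _)]
    norm_num
  -- the filter in column c
  have hfilter : μ.cells.filter (fun s => s.2 = c)
      = (Finset.range r).image (fun i => (i, c)) := by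
    ext p
    obtain ⟨i, j⟩ := p
    simp only [Finset.mem_filter, Finset.mem_image, Finset.mem_range, YoungDiagram.mem_cells,
      Prod.mk.injEq]
    constructor
    · rintro ⟨hmem, hj⟩
      subst hj
      exact ⟨i, hcol ▸ YoungDiagram.mem_iff_lt_colLen.mp hmem, rfl, rfl⟩
    · rintro ⟨a, ha, rfl, rfl⟩
      exact ⟨YoungDiagram.mem_iff_lt_colLen.mpr (hcol ▸ ha), rfl⟩
  -- the telescoping function
  set H : ℕ → ℝ := fun i => 1 - t ^ (r + 1 - max i b) with hH
  have hHne : ∀ i, i ≤ r → H i ≠ 0 := by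
    intro i hi
    have hx : r + 1 - max i b ≠ 0 := by omega
    have : t ^ (r + 1 - max i b) < 1 := pow_lt_one₀ (le_of_lt ht0) ht1 hx
    simp only [hH]
    intro hcontra
    nlinarith
  -- second product telescopes
  have hP2 : (∏ s ∈ μ.cells.filter (fun s => s.2 = c),
        (1 - (0 : ℝ) ^ arm Λ s * t ^ (leg Λ s + 1)) /
          (1 - (0 : ℝ) ^ arm μ s * t ^ (leg μ s + 1))) = H 0 / H r := by
    rw [hfilter, Finset.prod_image (by intro a _ a' _ h; exact (Prod.mk.injEq _ _ _ _).mp h |>.1)]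
    rw [← prod_div_telescope' H r hHne]
    apply Finset.prod_congr rfl
    intro i hi
    rw [Finset.mem_range] at hi
    have hiner : i ≠ r := ne_of_lt hi
    have harm : arm Λ (i, c) = arm μ (i, c) := by
      simp only [arm, hrowΛ i hiner]
    have hlegμ : leg μ (i, c) = r - (i + 1) := by simp only [leg, hcol]
    have hlegΛ : leg Λ (i, c) = r - i := by simp only [leg, hcolΛ]; omega
    by_cases hib : i < b
    · -- arm positive, factor = 1
      have hmem : (i, c + 1) ∈ μ := YoungDiagram.mem_iff_lt_colLen.mpr hib
      have harm0 : arm μ (i, c) ≠ 0 := by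
        have := YoungDiagram.mem_iff_lt_rowLen.mp hmem
        simp only [arm]
        omega
      have hmaxi : max i b = b := max_eq_right (le_of_lt hib)
      have hmaxi1 : max (i + 1) b = b := max_eq_right hib
      rw [harm, zero_pow harm0, hH]
      simp only [hmaxi, hmaxi1]
      rw [zero_mul, sub_zero, div_self (by
        have := hHne i (le_of_lt hi)
        simpa only [hH, hmaxi] using this)]
      norm_num
    · -- arm zero
      push_neg at hib
      have hrow : μ.rowLen i = c + 1 := by
        apply Nat.le_antisymm
        · by_contra h
          have : (i, c + 1) ∈ μ := YoungDiagram.mem_iff_lt_rowLen.mpr (by omega)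
          have := YoungDiagram.mem_iff_lt_colLen.mp this
          omega
        · have : (i, c) ∈ μ := YoungDiagram.mem_iff_lt_colLen.mpr (by omega)
          have := YoungDiagram.mem_iff_lt_rowLen.mp this
          omega
      have harm0 : arm μ (i, c) = 0 := by simp only [arm, hrow]; omega
      rw [harm, harm0, pow_zero, one_mul, one_mul, hlegμ, hlegΛ]
      have hmaxi : max i b = i := max_eq_left hib
      have hmaxi1 : max (i + 1) b = i + 1 := max_eq_left (by omega)
      simp only [hH, hmaxi, hmaxi1]
      have e1 : r - i + 1 = r + 1 - i := by omega
      have e2 : r - (i + 1) + 1 = r + 1 - (i + 1) := by omega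
      rw [e1, e2]
  -- prefactor
  have hpre : Λ.colLen c - 1 = r := by omega
  refine ⟨?_, ?_⟩
  · rw [hpre, hP1, hP2, mul_one]
    have hH0 : H 0 = 1 - t ^ (r + 1 - b) := by
      simp only [hH, Nat.max_eq_right (Nat.zero_le b)]
    have hHr : H r = 1 - t := by
      simp only [hH, Nat.max_eq_left hb]
      norm_num
    rw [hH0, hHr, hcol]
    obtain ⟨d, hd⟩ := Nat.exists_eq_add_of_le hb
    subst hd
    have hIcc : Finset.Icc b (b + d) = Finset.Ico b (b + d + 1) := by
      rw [Finset.Ico_add_one_right_eq_Icc]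
    rw [hIcc, Finset.sum_Ico_eq_sum_range]
    have hn : b + d + 1 - b = d + 1 := by omega
    rw [hn]
    have hsum : ∑ i ∈ Finset.range (d + 1), Q ^ (b + i)
        = Q ^ b * ((Q ^ (d + 1) - 1) / (Q - 1)) := by
      rw [← geom_sum_eq (ne_of_gt hQ) (d + 1), Finset.mul_sum]
      apply Finset.sum_congr rfl
      intro i _
      rw [pow_add]
    rw [hsum, ht]
    have h1 : Q - 1 ≠ 0 := sub_ne_zero.mpr (ne_of_gt hQ)
    have h2 : (1 : ℝ) - 1 / Q ≠ 0 := by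
      have : 1 / Q < 1 := by rw [div_lt_one hQ0]; exact hQ
      intro h; nlinarith
    field_simp
    have hz : Q * Q⁻¹ = 1 := mul_inv_cancel₀ hQne
    have hx : Q ^ b * Q⁻¹ ^ b = 1 := by rw [← mul_pow, hz, one_pow]
    have hy : Q ^ d * Q⁻¹ ^ d = 1 := by rw [← mul_pow, hz, one_pow]
    linear_combination (-(Q⁻¹ ^ d)) * hz + (Q⁻¹ ^ d - Q * (Q ^ d * Q⁻¹ ^ d)) * hx + (-Q) * hy
  · intro m hm
    apply Finset.sum_pos
    · intro k _
      exact pow_pos hm k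
    · exact Finset.nonempty_Icc.mpr (μ.colLen_anti c (c + 1) (Nat.le_succ c))
end

section
/- Consider the Young lattice with multiplicity function κ(λ,Λ) = (1/q^{λ'_i}) ∏_{s∈λ}[h_Λ(s)]_q / ∏_{s∈λ}[h_λ(s)]_q (cell added in column i, [m]_q the q-integer, h the hook length). Then the associated dimension function satisfies dim(Λ) = f^Λ · ∏_{s∈Λ} [h_Λ(s)]_q / q^{n(Λ)}, where f^Λ is the number of standard Young tableaux of shape Λ and n(Λ) = Σ_i (i−1)Λ_i. -/
/-- Hook length of the cell `s` in `μ`: `h = a + l + 1`. -/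
def hook (μ : YoungDiagram) (s : ℕ × ℕ) : ℕ := arm μ s + leg μ s + 1

/-- The q-integer `[m]_q = (q^m − 1)/(q − 1)`. -/
noncomputable def qint (q : ℝ) (m : ℕ) : ℝ := (q ^ m - 1) / (q - 1)

lemma step_facts (μ ν : YoungDiagram) (r c : ℕ) (hx : (r, c) ∉ μ.cells)
    (hν : ν.cells = insert (r, c) μ.cells) :
    μ.colLen c = r ∧ ν.rowLen r = c + 1 ∧ ν.colLen c = r + 1 := by
  have hmemν : ∀ a b, (a, b) ∈ ν ↔ (a, b) = (r, c) ∨ (a, b) ∈ μ := by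
    intro a b
    rw [← YoungDiagram.mem_cells, hν, Finset.mem_insert, YoungDiagram.mem_cells]
  have hrcν : (r, c) ∈ ν := (hmemν r c).2 (Or.inl rfl)
  have hrc1 : (r + 1, c) ∉ ν := by
    intro h
    rcases (hmemν _ _).1 h with h' | h'
    · simp at h'
    · exact hx ((YoungDiagram.mem_cells _).2 (μ.up_left_mem (Nat.le_succ r) le_rfl h'))
  have hrc2 : (r, c + 1) ∉ ν := by
    intro h
    rcases (hmemν _ _).1 h with h' | h'
    · simp at h'
    · exact hx ((YoungDiagram.mem_cells _).2 (μ.up_left_mem le_rfl (Nat.le_succ c) h'))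
  have hcolν : ν.colLen c = r + 1 := by
    apply Nat.le_antisymm
    · by_contra h
      push_neg at h
      exact hrc1 (YoungDiagram.mem_iff_lt_colLen.2 h)
    · exact YoungDiagram.mem_iff_lt_colLen.1 hrcν
  have hrowν : ν.rowLen r = c + 1 := by
    apply Nat.le_antisymm
    · by_contra h
      push_neg at h
      exact hrc2 (YoungDiagram.mem_iff_lt_rowLen.2 h)
    · exact YoungDiagram.mem_iff_lt_rowLen.1 hrcν
  have hcolμ : μ.colLen c = r := by
    apply Nat.le_antisymm
    · by_contra h
      push_neg at h
      exact hx ((YoungDiagram.mem_cells _).2 (YoungDiagram.mem_iff_lt_colLen.2 h))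
    · cases r with
      | zero => exact Nat.zero_le _
      | succ r' =>
        have h1 : (r', c) ∈ ν := ν.up_left_mem (Nat.le_succ r') le_rfl hrcν
        rcases (hmemν _ _).1 h1 with h' | h'
        · simp at h'
        · exact YoungDiagram.mem_iff_lt_colLen.1 h'
  exact ⟨hcolμ, hrowν, hcolν⟩

lemma sum_fst_eq (Λ : YoungDiagram) :
    ∑ s ∈ Λ.cells, s.1 = ∑ i ∈ Finset.range (Λ.colLen 0), i * Λ.rowLen i := by
  have hmap : ∀ x ∈ Λ.cells, x.1 ∈ Finset.range (Λ.colLen 0) := by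
    intro x hx
    have : (x.1, 0) ∈ Λ := Λ.up_left_mem le_rfl (Nat.zero_le _)
      ((YoungDiagram.mem_cells _).1 (by simpa using hx))
    simpa [Finset.mem_range] using YoungDiagram.mem_iff_lt_colLen.1 this
  rw [← Finset.sum_fiberwise_of_maps_to (g := Prod.fst) hmap (fun s => s.1)]
  refine Finset.sum_congr rfl fun i hi => ?_
  have h1 : ∀ x ∈ Λ.cells.filter (fun x => x.1 = i), x.1 = i := by
    intro x hx; exact (Finset.mem_filter.1 hx).2
  rw [Finset.sum_congr rfl h1, Finset.sum_const, smul_eq_mul, mul_comm, Λ.rowLen_eq_card]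
  rfl

/-- Consider the Young lattice with the Schur multiplicity function
`κ(λ,Λ) = (1/q^{λ'_i}) ∏_{s∈λ}[h_Λ(s)]_q / ∏_{s∈λ}[h_λ(s)]_q` (cell added in
column `i`, here the added cell is `(r,c)` 0-based so `λ'_i = colLen c`).
Encode the set of saturated chains from `∅` to `Λ` (with `|Λ| = n`) as a
Finset `S` of functions `ℕ → YoungDiagram` that start at `⊥`, add one cell at
each of the first `n` steps, and are constantly `Λ` from time `n` on; the
number of such chains is `f^Λ = S.card`, the number of standard Young tableaux
of shape `Λ`.  Then the dimension function —
`dim(Λ) = Σ_{chains γ} ∏_{j=1}^n κ(γ(j−1), γ(j))` — satisfies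
`dim(Λ) = f^Λ · ∏_{s∈Λ} [h_Λ(s)]_q / q^{n(Λ)}` with `n(Λ) = Σ_i (i−1)Λ_i`. -/
theorem schur_dimension_formula
    (q : ℝ) (hq0 : 0 < q) (hq1 : q < 1)
    (κf : YoungDiagram → YoungDiagram → ℝ)
    (hκf : ∀ (μ ν : YoungDiagram) (r c : ℕ), (r, c) ∉ μ.cells →
      ν.cells = insert (r, c) μ.cells →
      κf μ ν = (1 / q ^ μ.colLen c) *
        (∏ s ∈ μ.cells, qint q (hook ν s)) / (∏ s ∈ μ.cells, qint q (hook μ s)))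
    (n : ℕ) (Λ : YoungDiagram) (hΛ : Λ.cells.card = n)
    (S : Finset (ℕ → YoungDiagram))
    (hS : ∀ γ : ℕ → YoungDiagram, γ ∈ S ↔
      (γ 0 = ⊥ ∧ (∀ j, n ≤ j → γ j = Λ) ∧
        ∀ j < n, ∃ x, x ∉ (γ j).cells ∧ (γ (j + 1)).cells = insert x (γ j).cells)) :
    ∑ γ ∈ S, ∏ j ∈ Finset.range n, κf (γ j) (γ (j + 1))
      = S.card * (∏ s ∈ Λ.cells, qint q (hook Λ s)) /
          q ^ (∑ i ∈ Finset.range (Λ.colLen 0), i * Λ.rowLen i) := by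
  have hq1' : q - 1 ≠ 0 := sub_ne_zero.2 (ne_of_lt hq1)
  have hqne : q ≠ 0 := ne_of_gt hq0
  have hqint_ne : ∀ (μ : YoungDiagram) (s : ℕ × ℕ), qint q (hook μ s) ≠ 0 := by
    intro μ s
    unfold qint
    apply div_ne_zero _ hq1'
    have h1 : q ^ hook μ s < 1 := pow_lt_one₀ (le_of_lt hq0) hq1 (by simp [hook])
    linarith
  have key : ∀ γ ∈ S, ∏ j ∈ Finset.range n, κf (γ j) (γ (j + 1)) =
      (∏ s ∈ Λ.cells, qint q (hook Λ s)) / q ^ (∑ s ∈ Λ.cells, s.1) := by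
    intro γ hγ
    obtain ⟨h0, hn, hstep⟩ := (hS γ).1 hγ
    have main : ∀ j, j ≤ n → ∏ j' ∈ Finset.range j, κf (γ j') (γ (j' + 1)) =
        (∏ s ∈ (γ j).cells, qint q (hook (γ j) s)) / q ^ (∑ s ∈ (γ j).cells, s.1) := by
      intro j
      induction j with
      | zero => intro _; simp [h0]
      | succ j ih =>
        intro hjn
        have hj : j < n := hjn
        obtain ⟨⟨r, c⟩, hx, hins⟩ := hstep j hj
        obtain ⟨hcolμ, hrowν, hcolν⟩ := step_facts _ _ r c hx hins
        have h1 : qint q (hook (γ (j + 1)) (r, c)) = 1 := by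
          have : hook (γ (j + 1)) (r, c) = 1 := by
            simp [hook, arm, leg, hrowν, hcolν]
          rw [this]
          unfold qint
          rw [pow_one, div_self hq1']
        rw [Finset.prod_range_succ, ih (le_of_lt hj), hκf _ _ r c hx hins, hcolμ,
          hins, Finset.prod_insert hx, Finset.sum_insert hx, h1, one_mul, pow_add]
        have hP : (∏ s ∈ (γ j).cells, qint q (hook (γ j) s)) ≠ 0 :=
          Finset.prod_ne_zero_iff.2 (fun s _ => hqint_ne _ s)
        have hq1 : (q : ℝ) ^ r ≠ 0 := pow_ne_zero _ hqne
        have hq2 : (q : ℝ) ^ (∑ s ∈ (γ j).cells, s.1) ≠ 0 := pow_ne_zero _ hqne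
        field_simp
    have := main n le_rfl
    rwa [hn n le_rfl] at this
  rw [Finset.sum_congr rfl key, Finset.sum_const, nsmul_eq_mul, ← sum_fst_eq, mul_div_assoc]
end

section
/- For the Young lattice with Schur multiplicity κ(λ,Λ) = (1/q^{λ'_i}) ∏_{s∈λ}[h_Λ(s)]_q/∏_{s∈λ}[h_λ(s)]_q, the product of multiplicities along any saturated chain from λ to ν depends only on the endpoints λ and ν, and for any Λ ⊆ ν one has dim(Λ, ν)/dim(∅, ν) = (q^{n(Λ)} / ∏_{s∈Λ}[h_Λ(s)]_q) · dim*(ν/Λ)/dim*(ν), where dim(μ,ν) is the sum over chains from μ to ν of the product of κ's, dim* denotes the number of chains in the ordinary Young lattice (so dim*(ν) = f^ν and dim*(ν/Λ) = f^{ν/Λ}, the number of standard Young tableaux of skew shape ν/Λ). -/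
/-- `IsChain κ m μ ν γ` says that `γ` encodes a saturated chain of length `m`
from `μ` to `ν` in the Young lattice (constant from time `m` on). -/
def IsChainFrom (m : ℕ) (μ ν : YoungDiagram) (γ : ℕ → YoungDiagram) : Prop :=
  γ 0 = μ ∧ (∀ j, m ≤ j → γ j = ν) ∧
    ∀ j < m, ∃ x, x ∉ (γ j).cells ∧ (γ (j + 1)).cells = insert x (γ j).cells

/-! ### Auxiliary material -/

lemma qint_pos {q : ℝ} (hq0 : 0 < q) (hq1 : q < 1) {m : ℕ} (hm : 0 < m) : 0 < qint q m := by
  have hlt : q ^ m < 1 := pow_lt_one₀ hq0.le hq1 hm.ne'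
  have h : qint q m = (1 - q ^ m) / (1 - q) := by
    unfold qint
    rw [div_eq_div_iff (by linarith) (by linarith)]; ring
  rw [h]
  exact div_pos (by linarith) (by linarith)

lemma qint_one {q : ℝ} (hq1 : q ≠ 1) : qint q 1 = 1 := by
  unfold qint
  rw [pow_one]
  exact div_self (sub_ne_zero.2 hq1)

/-- Product of q-hook numbers. -/
noncomputable def Fprod (q : ℝ) (μ : YoungDiagram) : ℝ := ∏ s ∈ μ.cells, qint q (hook μ s)

/-- `n(μ) = Σ_{s ∈ μ} s.1`. -/
def Nsum (μ : YoungDiagram) : ℕ := ∑ s ∈ μ.cells, s.1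

/-- The weight `G(μ) = F(μ)/q^{n(μ)}` so that `κ(μ,ν) = G(ν)/G(μ)` on covers. -/
noncomputable def Gwt (q : ℝ) (μ : YoungDiagram) : ℝ := Fprod q μ / q ^ Nsum μ

lemma Fprod_pos {q : ℝ} (hq0 : 0 < q) (hq1 : q < 1) (μ : YoungDiagram) : 0 < Fprod q μ :=
  Finset.prod_pos fun s _ => qint_pos hq0 hq1 (Nat.succ_pos _)

lemma Gwt_pos {q : ℝ} (hq0 : 0 < q) (hq1 : q < 1) (μ : YoungDiagram) : 0 < Gwt q μ :=
  div_pos (Fprod_pos hq0 hq1 μ) (pow_pos hq0 _)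

lemma Gwt_bot {q : ℝ} : Gwt q ⊥ = 1 := by
  simp [Gwt, Fprod, Nsum]

section Cover

variable {μ ν : YoungDiagram} {r c : ℕ}

lemma cover_mem (h2 : ν.cells = insert (r, c) μ.cells) {a b : ℕ} :
    (a, b) ∈ ν ↔ (a, b) = (r, c) ∨ (a, b) ∈ μ := by
  rw [← YoungDiagram.mem_cells, h2, Finset.mem_insert, YoungDiagram.mem_cells]

lemma cover_colLen (h1 : (r, c) ∉ μ.cells) (h2 : ν.cells = insert (r, c) μ.cells) :
    μ.colLen c = r := by
  rw [YoungDiagram.mem_cells] at h1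
  have hrcν : (r, c) ∈ ν := (cover_mem h2).2 (Or.inl rfl)
  have hle : μ.colLen c ≤ r := by
    by_contra h
    exact h1 (YoungDiagram.mem_iff_lt_colLen.2 (lt_of_not_ge h))
  have hge : r ≤ μ.colLen c := by
    rcases Nat.eq_zero_or_pos r with hr | hr
    · omega
    · have hmem : (r - 1, c) ∈ ν := ν.up_left_mem (Nat.sub_le _ _) le_rfl hrcν
      rcases (cover_mem h2).1 hmem with h | h
      · exfalso
        have : r - 1 = r := congrArg Prod.fst h
        omega
      · have := YoungDiagram.mem_iff_lt_colLen.1 h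
        omega
  omega

lemma cover_colLen' (h1 : (r, c) ∉ μ.cells) (h2 : ν.cells = insert (r, c) μ.cells) :
    ν.colLen c = r + 1 := by
  rw [YoungDiagram.mem_cells] at h1
  have hrcν : (r, c) ∈ ν := (cover_mem h2).2 (Or.inl rfl)
  have hge : r + 1 ≤ ν.colLen c := YoungDiagram.mem_iff_lt_colLen.1 hrcν
  have hle : ν.colLen c ≤ r + 1 := by
    by_contra h
    have hmem : (r + 1, c) ∈ ν := YoungDiagram.mem_iff_lt_colLen.2 (by omega)
    rcases (cover_mem h2).1 hmem with h' | h'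
    · have : r + 1 = r := congrArg Prod.fst h'
      omega
    · exact h1 (μ.up_left_mem (Nat.le_succ r) le_rfl h')
  omega

lemma cover_rowLen' (h1 : (r, c) ∉ μ.cells) (h2 : ν.cells = insert (r, c) μ.cells) :
    ν.rowLen r = c + 1 := by
  rw [YoungDiagram.mem_cells] at h1
  have hrcν : (r, c) ∈ ν := (cover_mem h2).2 (Or.inl rfl)
  have hge : c + 1 ≤ ν.rowLen r := YoungDiagram.mem_iff_lt_rowLen.1 hrcν
  have hle : ν.rowLen r ≤ c + 1 := by
    by_contra h
    have hmem : (r, c + 1) ∈ ν := YoungDiagram.mem_iff_lt_rowLen.2 (by omega)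
    rcases (cover_mem h2).1 hmem with h' | h'
    · have : c + 1 = c := congrArg Prod.snd h'
      omega
    · exact h1 (μ.up_left_mem le_rfl (Nat.le_succ c) h')
  omega

lemma cover_hook_new (h1 : (r, c) ∉ μ.cells) (h2 : ν.cells = insert (r, c) μ.cells) :
    hook ν (r, c) = 1 := by
  have h3 := cover_colLen' h1 h2
  have h4 := cover_rowLen' h1 h2
  simp [hook, arm, leg, h3, h4]

lemma cover_Nsum (h1 : (r, c) ∉ μ.cells) (h2 : ν.cells = insert (r, c) μ.cells) :
    Nsum ν = Nsum μ + r := by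
  unfold Nsum
  rw [h2, Finset.sum_insert h1]
  omega

lemma cover_Fprod {q : ℝ} (hq1 : q ≠ 1) (h1 : (r, c) ∉ μ.cells)
    (h2 : ν.cells = insert (r, c) μ.cells) :
    Fprod q ν = ∏ s ∈ μ.cells, qint q (hook ν s) := by
  unfold Fprod
  rw [h2, Finset.prod_insert h1, cover_hook_new h1 h2, qint_one hq1, one_mul]

end Cover

lemma kappa_eq_G {q : ℝ} (hq0 : 0 < q) (hq1 : q < 1)
    (κf : YoungDiagram → YoungDiagram → ℝ)
    (hκf : ∀ (μ ν : YoungDiagram) (r c : ℕ), (r, c) ∉ μ.cells →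
      ν.cells = insert (r, c) μ.cells →
      κf μ ν = (1 / q ^ μ.colLen c) *
        (∏ s ∈ μ.cells, qint q (hook ν s)) / (∏ s ∈ μ.cells, qint q (hook μ s)))
    {μ ν : YoungDiagram} {r c : ℕ} (h1 : (r, c) ∉ μ.cells)
    (h2 : ν.cells = insert (r, c) μ.cells) :
    κf μ ν = Gwt q ν / Gwt q μ := by
  have hq1' : q ≠ 1 := ne_of_lt hq1
  have hcol := cover_colLen h1 h2
  have hF := cover_Fprod hq1' h1 h2
  have hN := cover_Nsum h1 h2
  rw [hκf μ ν r c h1 h2, hcol, ← hF]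
  unfold Gwt
  rw [hN]
  have hqr : (q : ℝ) ^ r ≠ 0 := pow_ne_zero _ (ne_of_gt hq0)
  have hqN : (q : ℝ) ^ Nsum μ ≠ 0 := pow_ne_zero _ (ne_of_gt hq0)
  have hFμ : Fprod q μ ≠ 0 := ne_of_gt (Fprod_pos hq0 hq1 μ)
  have hFν : Fprod q ν ≠ 0 := ne_of_gt (Fprod_pos hq0 hq1 ν)
  have hdef : (∏ s ∈ μ.cells, qint q (hook μ s)) = Fprod q μ := rfl
  rw [hdef, pow_add]
  field_simp

lemma chain_prod_eq {q : ℝ} (hq0 : 0 < q) (hq1 : q < 1)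
    (κf : YoungDiagram → YoungDiagram → ℝ)
    (hκf : ∀ (μ ν : YoungDiagram) (r c : ℕ), (r, c) ∉ μ.cells →
      ν.cells = insert (r, c) μ.cells →
      κf μ ν = (1 / q ^ μ.colLen c) *
        (∏ s ∈ μ.cells, qint q (hook ν s)) / (∏ s ∈ μ.cells, qint q (hook μ s))) :
    ∀ (m : ℕ) (γ : ℕ → YoungDiagram),
      (∀ j < m, ∃ x, x ∉ (γ j).cells ∧ (γ (j + 1)).cells = insert x (γ j).cells) →
      ∏ j ∈ Finset.range m, κf (γ j) (γ (j + 1)) = Gwt q (γ m) / Gwt q (γ 0) := by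
  intro m
  induction m with
  | zero =>
    intro γ _
    simp [div_self (ne_of_gt (Gwt_pos hq0 hq1 (γ 0)))]
  | succ m ih =>
    intro γ hγ
    rw [Finset.prod_range_succ, ih γ (fun j hj => hγ j (Nat.lt_succ_of_lt hj))]
    obtain ⟨⟨x1, x2⟩, hx1, hx2⟩ := hγ m (Nat.lt_succ_self m)
    rw [kappa_eq_G hq0 hq1 κf hκf hx1 hx2]
    have h1 : Gwt q (γ m) ≠ 0 := ne_of_gt (Gwt_pos hq0 hq1 _)
    have h2 : Gwt q (γ 0) ≠ 0 := ne_of_gt (Gwt_pos hq0 hq1 _)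
    field_simp

lemma nsum_eq_rowsum (μ : YoungDiagram) :
    ∑ i ∈ Finset.range (μ.colLen 0), i * μ.rowLen i = Nsum μ := by
  have hcells : μ.cells = (Finset.range (μ.colLen 0)).biUnion μ.row := by
    ext ⟨a, b⟩
    simp only [Finset.mem_biUnion, Finset.mem_range, YoungDiagram.mem_cells,
      YoungDiagram.mem_row_iff]
    constructor
    · intro h
      refine ⟨a, ?_, h, rfl⟩
      rw [← YoungDiagram.mem_iff_lt_colLen]
      exact μ.up_left_mem le_rfl (Nat.zero_le _) h
    · rintro ⟨i, -, h, rfl⟩; exact h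
  unfold Nsum
  rw [hcells, Finset.sum_biUnion]
  · refine Finset.sum_congr rfl fun i _ => ?_
    rw [YoungDiagram.row_eq_prod, Finset.sum_product]
    simp [mul_comm]
  · intro a _ b _ hab
    simp only [Function.onFun, Finset.disjoint_left]
    intro s hsa hsb
    rw [YoungDiagram.mem_row_iff] at hsa hsb
    exact hab (hsa.2 ▸ hsb.2)

/-- For the Young lattice with Schur multiplicity
`κ(λ,Λ) = (1/q^{λ'_i}) ∏_{s∈λ}[h_Λ(s)]_q/∏_{s∈λ}[h_λ(s)]_q`, the product of
multiplicities along a saturated chain depends only on the endpoints; and with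
`dim(μ,ν) = Σ_{chains μ→ν} ∏ κ` (encoded via Finsets `SΛ`, `S0` of chains from
`Λ` to `ν` and from `∅` to `ν`, whose cardinalities are the numbers of standard
Young tableaux `f^{ν/Λ} = dim*(ν/Λ)` and `f^ν = dim*(ν)`), one has
`dim(Λ,ν)/dim(∅,ν) = (q^{n(Λ)}/∏_{s∈Λ}[h_Λ(s)]_q) · dim*(ν/Λ)/dim*(ν)`. -/
theorem schur_relative_dimension
    (q : ℝ) (hq0 : 0 < q) (hq1 : q < 1)
    (κf : YoungDiagram → YoungDiagram → ℝ)
    (hκf : ∀ (μ ν : YoungDiagram) (r c : ℕ), (r, c) ∉ μ.cells →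
      ν.cells = insert (r, c) μ.cells →
      κf μ ν = (1 / q ^ μ.colLen c) *
        (∏ s ∈ μ.cells, qint q (hook ν s)) / (∏ s ∈ μ.cells, qint q (hook μ s))) :
    (∀ (m : ℕ) (μ ν : YoungDiagram) (γ δ : ℕ → YoungDiagram),
      IsChainFrom m μ ν γ → IsChainFrom m μ ν δ →
      ∏ j ∈ Finset.range m, κf (γ j) (γ (j + 1))
        = ∏ j ∈ Finset.range m, κf (δ j) (δ (j + 1))) ∧
    (∀ (Λ ν : YoungDiagram), Λ.cells ⊆ ν.cells →
      ∀ (SΛ S0 : Finset (ℕ → YoungDiagram)),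
      (∀ γ, γ ∈ SΛ ↔ IsChainFrom (ν.cells.card - Λ.cells.card) Λ ν γ) →
      (∀ γ, γ ∈ S0 ↔ IsChainFrom ν.cells.card ⊥ ν γ) →
      (∑ γ ∈ SΛ, ∏ j ∈ Finset.range (ν.cells.card - Λ.cells.card), κf (γ j) (γ (j + 1))) /
          (∑ γ ∈ S0, ∏ j ∈ Finset.range ν.cells.card, κf (γ j) (γ (j + 1)))
        = (q ^ (∑ i ∈ Finset.range (Λ.colLen 0), i * Λ.rowLen i) /
            ∏ s ∈ Λ.cells, qint q (hook Λ s)) * ((SΛ.card : ℝ) / (S0.card : ℝ))) := by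
  have key : ∀ (m : ℕ) (μ ν : YoungDiagram) (γ : ℕ → YoungDiagram),
      IsChainFrom m μ ν γ →
      ∏ j ∈ Finset.range m, κf (γ j) (γ (j + 1)) = Gwt q ν / Gwt q μ := by
    rintro m μ ν γ ⟨h0, hm, hc⟩
    rw [chain_prod_eq hq0 hq1 κf hκf m γ hc, h0, hm m le_rfl]
  constructor
  · intro m μ ν γ δ hγ hδ
    rw [key m μ ν γ hγ, key m μ ν δ hδ]
  · intro Λ ν _ SΛ S0 hSΛ hS0
    have hsum1 : (∑ γ ∈ SΛ, ∏ j ∈ Finset.range (ν.cells.card - Λ.cells.card),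
        κf (γ j) (γ (j + 1))) = (SΛ.card : ℝ) * (Gwt q ν / Gwt q Λ) := by
      rw [Finset.sum_congr rfl fun γ hγ => key _ Λ ν γ ((hSΛ γ).1 hγ)]
      rw [Finset.sum_const, nsmul_eq_mul]
    have hsum2 : (∑ γ ∈ S0, ∏ j ∈ Finset.range ν.cells.card,
        κf (γ j) (γ (j + 1))) = (S0.card : ℝ) * Gwt q ν := by
      rw [Finset.sum_congr rfl fun γ hγ => key _ ⊥ ν γ ((hS0 γ).1 hγ)]
      rw [Finset.sum_const, nsmul_eq_mul, Gwt_bot, div_one]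
    rw [hsum1, hsum2, nsum_eq_rowsum]
    have hGν : Gwt q ν ≠ 0 := ne_of_gt (Gwt_pos hq0 hq1 ν)
    have hGΛ : Gwt q Λ ≠ 0 := ne_of_gt (Gwt_pos hq0 hq1 Λ)
    have hFΛ : (∏ s ∈ Λ.cells, qint q (hook Λ s)) ≠ 0 := ne_of_gt (Fprod_pos hq0 hq1 Λ)
    have hqN : (q : ℝ) ^ Nsum Λ ≠ 0 := pow_ne_zero _ (ne_of_gt hq0)
    have hGdef : Gwt q Λ = (∏ s ∈ Λ.cells, qint q (hook Λ s)) / q ^ Nsum Λ := rfl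
    rcases eq_or_ne (S0.card : ℝ) 0 with h0 | h0
    · rw [h0]
      simp
    · rw [hGdef]
      field_simp
end

section
/- Let 0 ≤ q < 1, 0 < t < 1, and let λ ⊂ Λ be partitions differing by one cell added in column i. Then κ(λ,Λ) = (1/t^{Λ'_i−1}) ∏_{s∈R} (1 − q^{a_Λ(s)+1} t^{l_Λ(s)})/(1 − q^{a_λ(s)+1} t^{l_λ(s)}) ∏_{s∈C} (1 − q^{a_Λ(s)} t^{l_Λ(s)+1})/(1 − q^{a_λ(s)} t^{l_λ(s)+1}) is a strictly positive real number; consequently dim(Λ) > 0 for every partition Λ in the associated Bratteli diagram. -/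
lemma factor1 {q t : ℝ} (hq0 : 0 ≤ q) (hq1 : q < 1) (ht0 : 0 < t) (ht1 : t < 1)
    (a l : ℕ) : 0 < 1 - q ^ (a + 1) * t ^ l := by
  have h1 : q ^ (a + 1) < 1 := pow_lt_one₀ hq0 hq1 (Nat.succ_ne_zero a)
  have h2 : t ^ l ≤ 1 := pow_le_one₀ ht0.le ht1.le
  have h3 := mul_le_of_le_one_right (pow_nonneg hq0 (a + 1)) h2
  linarith

lemma factor2 {q t : ℝ} (hq0 : 0 ≤ q) (hq1 : q < 1) (ht0 : 0 < t) (ht1 : t < 1)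
    (a l : ℕ) : 0 < 1 - q ^ a * t ^ (l + 1) := by
  have h1 : q ^ a ≤ 1 := pow_le_one₀ hq0 hq1.le
  have h2 : t ^ (l + 1) < 1 := pow_lt_one₀ ht0.le ht1 (Nat.succ_ne_zero l)
  have h3 := mul_le_of_le_one_left (pow_nonneg ht0.le (l + 1)) h1
  linarith

lemma chain_exists : ∀ (n : ℕ) (Λ : YoungDiagram), Λ.cells.card = n →
    ∃ γ : ℕ → YoungDiagram, γ 0 = ⊥ ∧ (∀ j, n ≤ j → γ j = Λ) ∧
      ∀ j < n, ∃ x, x ∉ (γ j).cells ∧ (γ (j + 1)).cells = insert x (γ j).cells := by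
  intro n
  induction n with
  | zero =>
    intro Λ h
    have hΛ : Λ = ⊥ := by
      ext x
      simp [← YoungDiagram.mem_cells, Finset.card_eq_zero.mp h]
    exact ⟨fun _ => ⊥, rfl, fun j _ => hΛ.symm, fun j hj => absurd hj (Nat.not_lt_zero j)⟩
  | succ n ih =>
    intro Λ h
    -- corner cell
    have hne : Λ.cells.Nonempty := Finset.card_pos.mp (by omega)
    obtain ⟨⟨i0, j0⟩, hi0⟩ := hne
    have h00 : (0, 0) ∈ Λ := Λ.up_left_mem (Nat.zero_le _) (Nat.zero_le _)
      (Λ.mem_cells _ |>.mp hi0)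
    have hcol : 0 < Λ.colLen 0 := YoungDiagram.mem_iff_lt_colLen.mp h00
    set r := Λ.colLen 0 - 1 with hr
    have hrmem : (r, 0) ∈ Λ := YoungDiagram.mem_iff_lt_colLen.mpr (by omega)
    have hrow : 0 < Λ.rowLen r := YoungDiagram.mem_iff_lt_rowLen.mp hrmem
    set c := Λ.rowLen r - 1 with hc
    have hrc : (r, c) ∈ Λ := YoungDiagram.mem_iff_lt_rowLen.mpr (by omega)
    -- μ := Λ minus corner
    have hlower : IsLowerSet (↑(Λ.cells.erase (r, c)) : Set (ℕ × ℕ)) := by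
      intro a b hba ha
      simp only [Finset.coe_erase, Set.mem_diff, Finset.mem_coe,
        Set.mem_singleton_iff] at ha ⊢
      obtain ⟨haΛ, hane⟩ := ha
      refine ⟨Λ.isLowerSet hba haΛ, ?_⟩
      rintro rfl
      have h1 : r ≤ a.1 := hba.1
      have h2 : c ≤ a.2 := hba.2
      have ha1 : a.1 < Λ.colLen a.2 := YoungDiagram.mem_iff_lt_colLen.mp
        ((Λ.mem_cells _).mp (by simpa using haΛ))
      have ha1' : Λ.colLen a.2 ≤ Λ.colLen 0 := Λ.colLen_anti 0 a.2 (Nat.zero_le _)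
      have ha1eq : a.1 = r := by omega
      have ha2 : a.2 < Λ.rowLen a.1 := YoungDiagram.mem_iff_lt_rowLen.mp
        ((Λ.mem_cells _).mp (by simpa using haΛ))
      rw [ha1eq] at ha2
      exact hane (Prod.ext ha1eq (by omega))
    set μ : YoungDiagram := ⟨Λ.cells.erase (r, c), hlower⟩ with hμ
    have hμcard : μ.cells.card = n := by
      simp [hμ, Finset.card_erase_of_mem hi0, Finset.card_erase_of_mem hrc, h]
    obtain ⟨γ, hγ0, hγn, hγstep⟩ := ih μ hμcard
    refine ⟨fun j => if j ≤ n then γ j else Λ, by simp [hγ0], ?_, ?_⟩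
    · intro j hj
      have : ¬ j ≤ n := by omega
      simp [this]
    · intro j hj
      rcases Nat.lt_or_ge j n with hjn | hjn
      · obtain ⟨x, hx1, hx2⟩ := hγstep j hjn
        refine ⟨x, ?_, ?_⟩ <;> simp [Nat.le_of_lt hjn, Nat.succ_le_of_lt hjn, hx1, hx2]
      · have hjeq : j = n := by omega
        subst hjeq
        have h1 : ¬ (j + 1 ≤ j) := by omega
        refine ⟨(r, c), ?_, ?_⟩
        · beta_reduce
          rw [if_pos le_rfl, hγn j le_rfl]
          exact Finset.notMem_erase _ _
        · beta_reduce
          rw [if_neg h1, if_pos le_rfl, hγn j le_rfl]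
          exact (Finset.insert_erase hrc).symm

/-- Positivity of the Macdonald multiplicity and of the dimension function.
Let `0 ≤ q < 1` and `0 < t < 1`, and let `κf` be the multiplicity function of
the Macdonald Bratteli diagram: for `λ ⊂ Λ` differing by one cell added at
`(r,c)` (column `i = c+1` 1-based, `Λ'_i = Λ.colLen c`),
`κf λ Λ = (1/t^{Λ'_i−1}) ∏_{s∈R} (1−q^{a_Λ+1}t^{l_Λ})/(1−q^{a_λ+1}t^{l_λ})
 ∏_{s∈C} (1−q^{a_Λ}t^{l_Λ+1})/(1−q^{a_λ}t^{l_λ+1})`.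
Then `κf λ Λ > 0` for every such pair, and consequently
`dim(Λ) = Σ_{chains ∅→Λ} ∏ κf > 0` for every partition `Λ`, where the chains
of length `n = |Λ|` are encoded as a Finset `S` of functions `ℕ → YoungDiagram`
starting at `⊥`, adding one cell at each of the first `n` steps, and constant
equal to `Λ` from time `n` on. -/
theorem macdonald_multiplicity_pos_and_dim_pos
    (q t : ℝ) (hq0 : 0 ≤ q) (hq1 : q < 1) (ht0 : 0 < t) (ht1 : t < 1)
    (κf : YoungDiagram → YoungDiagram → ℝ)
    (hκf : ∀ (μ Λ : YoungDiagram) (r c : ℕ), (r, c) ∉ μ.cells →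
      Λ.cells = insert (r, c) μ.cells →
      κf μ Λ = (1 / t ^ (Λ.colLen c - 1)) *
        (∏ s ∈ μ.cells.filter (fun s => s.1 = r),
          (1 - q ^ (arm Λ s + 1) * t ^ leg Λ s) /
            (1 - q ^ (arm μ s + 1) * t ^ leg μ s)) *
        (∏ s ∈ μ.cells.filter (fun s => s.2 = c),
          (1 - q ^ arm Λ s * t ^ (leg Λ s + 1)) /
            (1 - q ^ arm μ s * t ^ (leg μ s + 1)))) :
    (∀ (μ Λ : YoungDiagram) (r c : ℕ), (r, c) ∉ μ.cells →
      Λ.cells = insert (r, c) μ.cells → 0 < κf μ Λ) ∧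
    (∀ (n : ℕ) (Λ : YoungDiagram), Λ.cells.card = n →
      ∀ S : Finset (ℕ → YoungDiagram),
      (∀ γ : ℕ → YoungDiagram, γ ∈ S ↔
        (γ 0 = ⊥ ∧ (∀ j, n ≤ j → γ j = Λ) ∧
          ∀ j < n, ∃ x, x ∉ (γ j).cells ∧ (γ (j + 1)).cells = insert x (γ j).cells)) →
      0 < ∑ γ ∈ S, ∏ j ∈ Finset.range n, κf (γ j) (γ (j + 1))) := by
  have key : ∀ (μ Λ : YoungDiagram) (r c : ℕ), (r, c) ∉ μ.cells →
      Λ.cells = insert (r, c) μ.cells → 0 < κf μ Λ := by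
    intro μ Λ r c hnot hins
    rw [hκf μ Λ r c hnot hins]
    refine mul_pos (mul_pos ?_ ?_) ?_
    · exact one_div_pos.mpr (pow_pos ht0 _)
    · exact Finset.prod_pos fun s _ => div_pos
        (factor1 hq0 hq1 ht0 ht1 _ _) (factor1 hq0 hq1 ht0 ht1 _ _)
    · exact Finset.prod_pos fun s _ => div_pos
        (factor2 hq0 hq1 ht0 ht1 _ _) (factor2 hq0 hq1 ht0 ht1 _ _)
  refine ⟨key, ?_⟩
  intro n Λ hcard S hS
  obtain ⟨γ, hγ⟩ := chain_exists n Λ hcard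
  refine Finset.sum_pos ?_ ⟨γ, (hS γ).mpr hγ⟩
  intro γ' hγ'
  obtain ⟨-, -, hstep⟩ := (hS γ').mp hγ'
  refine Finset.prod_pos fun j hj => ?_
  obtain ⟨⟨x1, x2⟩, hx1, hx2⟩ := hstep j (Finset.mem_range.mp hj)
  exact key _ _ x1 x2 hx1 hx2
end
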